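/- arXiv:math/0210319 — 5 statements merged into one kernel-verified Lean document; each statement's English description precedes it below -/
import Mathlib

section
/- For θ > 0 and each positive integer n, the values e(λ) = θ^ℓ · n! / [θ]_n · ∏_{j=1}^ℓ 1/Λ_j, where λ = (λ_1,...,λ_ℓ) ranges over compositions of n, Λ_j = λ_j + ... + λ_ℓ, and [θ]_n = θ(θ+1)···(θ+n-1), sum to 1 over all compositions of n. -/
open Finset

noncomputable def risingFact (x : ℝ) (k : ℕ) : ℝ := ∏ i ∈ Finset.range k, (x + i)

private lemma drop_sum_eq {n : ℕ} (c : Composition n) (j : ℕ) :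
    (c.blocks.drop j).sum = n - c.sizeUpTo j := by
  have h : (c.blocks.take j).sum + (c.blocks.drop j).sum = n := by
    rw [← List.sum_append, List.take_append_drop, c.blocks_sum]
  have h2 : c.sizeUpTo j = (c.blocks.take j).sum := rfl
  omega

private lemma coe_boundary {n : ℕ} (c : Composition n) (i : Fin (c.length + 1)) :
    ((c.boundary i : Fin (n+1)) : ℕ) = c.sizeUpTo i := by
  simp [Composition.boundary]

private lemma erase_last_univ (k : ℕ) :
    (Finset.univ : Finset (Fin (k+1))).erase (Fin.last k) = Finset.univ.map Fin.castSuccEmb := by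
  rw [← Fin.Iio_last_eq_map]
  ext i
  simp only [Finset.mem_erase, Finset.mem_univ, and_true, Finset.mem_Iio, Fin.lt_last_iff_ne_last]

private lemma boundaries_erase {n : ℕ} (c : Composition n) : c.boundaries.erase (Fin.last n)
    = (Finset.univ.erase (Fin.last c.length)).map c.boundary.toEmbedding := by
  rw [Finset.map_erase]
  simp [Composition.boundaries]

private lemma weight_eq {n : ℕ} (c : Composition n) (θ : ℝ) :
    θ ^ c.length * ∏ j ∈ Finset.range c.length, (((c.blocks.drop j).sum : ℝ))⁻¹
      = ∏ b ∈ c.boundaries.erase (Fin.last n), (θ * ((n : ℝ) - (b : ℕ))⁻¹) := by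
  rw [boundaries_erase, erase_last_univ, Finset.map_map, Finset.prod_map]
  have : ∀ i : Fin c.length,
      (θ * ((n : ℝ) - (((Fin.castSuccEmb.trans c.boundary.toEmbedding) i : Fin (n+1)) : ℕ))⁻¹)
        = θ * (((c.blocks.drop i).sum : ℝ))⁻¹ := by
    intro i
    have h1 : (((Fin.castSuccEmb.trans c.boundary.toEmbedding) i : Fin (n+1)) : ℕ)
        = c.sizeUpTo i := by
      simp [coe_boundary]
    rw [h1, drop_sum_eq, Nat.cast_sub (c.sizeUpTo_le _)]
  rw [Finset.prod_congr rfl (fun i _ => this i), Finset.prod_mul_distrib, Finset.prod_const,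
    Finset.card_univ, Fintype.card_fin, ← Finset.prod_range fun j => (((c.blocks.drop j).sum : ℝ))⁻¹]

private lemma sum_boundaries {n : ℕ} (hn : 1 ≤ n) (F : Finset (Fin (n+1)) → ℝ) :
    ∑ c : Composition n, F c.boundaries
      = ∑ A ∈ (((Finset.univ : Finset (Fin (n+1))).erase 0).erase (Fin.last n)).powerset,
          F (insert 0 (insert (Fin.last n) A)) := by
  have hl0 : (Fin.last n) ≠ (0 : Fin (n+1)) := by
    rw [← Fin.val_ne_iff]; simpa using by omega
  rw [show (∑ c : Composition n, F c.boundaries) = ∑ d : CompositionAsSet n, F d.boundaries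
    from Fintype.sum_equiv (compositionEquiv n) _ _ (fun c => rfl)]
  refine Finset.sum_nbij' (i := fun d => (d.boundaries.erase 0).erase (Fin.last n))
    (j := fun A => ⟨insert 0 (insert (Fin.last n) A), Finset.mem_insert_self _ _,
      by simp⟩) ?_ ?_ ?_ ?_ ?_
  · intro d _
    simp only [Finset.mem_powerset]
    intro x hx
    simp only [Finset.mem_erase] at hx ⊢
    exact ⟨hx.1, hx.2.1, Finset.mem_univ x⟩
  · intro A _
    exact Finset.mem_univ _
  · intro d _
    have h1 : Fin.last n ∈ d.boundaries.erase 0 :=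
      Finset.mem_erase.2 ⟨hl0, d.getLast_mem⟩
    ext1
    simp only
    rw [Finset.insert_erase h1, Finset.insert_erase d.zero_mem]
  · intro A hA
    simp only [Finset.mem_powerset] at hA
    have h0A : (0 : Fin (n+1)) ∉ insert (Fin.last n) A := by
      simp only [Finset.mem_insert]
      push_neg
      refine ⟨fun h => hl0 h.symm, fun h => ?_⟩
      have := hA h
      simp at this
    have hlA : Fin.last n ∉ A := fun h => by have := hA h; simp at this
    simp only
    rw [Finset.erase_insert h0A, Finset.erase_insert hlA]
  · intro d _
    have h1 : Fin.last n ∈ d.boundaries.erase 0 :=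
      Finset.mem_erase.2 ⟨hl0, d.getLast_mem⟩
    rw [Finset.insert_erase h1, Finset.insert_erase d.zero_mem]

private lemma mem_U {n : ℕ} (b : Fin (n+1))
    (hb : b ∈ (((Finset.univ : Finset (Fin (n+1))).erase 0).erase (Fin.last n))) :
    (b : ℕ) ≠ 0 ∧ (b : ℕ) ≠ n := by
  simp only [Finset.mem_erase, Finset.mem_univ, and_true] at hb
  obtain ⟨h1, h2⟩ := hb
  rw [← Fin.val_ne_iff] at h1 h2
  exact ⟨by simpa using h2, by simpa using h1⟩

private lemma sum_eval {n : ℕ} (hn : 1 ≤ n) (θ : ℝ) :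
    ∑ A ∈ (((Finset.univ : Finset (Fin (n+1))).erase 0).erase (Fin.last n)).powerset,
      ∏ b ∈ (insert 0 (insert (Fin.last n) A)).erase (Fin.last n),
        (θ * ((n : ℝ) - (b : ℕ))⁻¹)
    = (θ * (n:ℝ)⁻¹) * ∏ m ∈ Finset.Ico 1 n, (1 + θ * (m:ℝ)⁻¹) := by
  set U := (((Finset.univ : Finset (Fin (n+1))).erase 0).erase (Fin.last n)) with hU
  set g : Fin (n+1) → ℝ := fun b => θ * ((n : ℝ) - (b : ℕ))⁻¹ with hg
  have hl0 : (Fin.last n) ≠ (0 : Fin (n+1)) := by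
    rw [← Fin.val_ne_iff]; simpa using by omega
  have step1 : ∀ A ∈ U.powerset,
      (∏ b ∈ (insert 0 (insert (Fin.last n) A)).erase (Fin.last n), g b)
        = g 0 * ∏ b ∈ A, g b := by
    intro A hA
    simp only [Finset.mem_powerset, hU] at hA
    have h0A : (0 : Fin (n+1)) ∉ A := fun h => by have := mem_U _ (hA h); simp at this
    have hlA : Fin.last n ∉ A := fun h => by
      have := mem_U _ (hA h); simp [Fin.val_last] at this
    rw [Finset.insert_comm, Finset.erase_insert
      (by simp only [Finset.mem_insert]; push_neg; exact ⟨hl0, hlA⟩),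
      Finset.prod_insert h0A]
  rw [Finset.sum_congr rfl step1, ← Finset.mul_sum]
  have step2 : ∑ A ∈ U.powerset, ∏ b ∈ A, g b = ∏ b ∈ U, (g b + 1) := by
    rw [Finset.prod_add]
    exact Finset.sum_congr rfl (fun t _ => by simp)
  rw [step2]
  have hg0 : g 0 = θ * (n:ℝ)⁻¹ := by simp [hg]
  rw [hg0]
  congr 1
  refine Finset.prod_nbij' (i := fun b => n - (b : ℕ)) (j := fun m => ⟨n - m, by omega⟩)
    ?_ ?_ ?_ ?_ ?_
  · intro b hb
    have h := mem_U b hb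
    have := b.isLt
    simp only [Finset.mem_Ico]
    omega
  · intro m hm
    simp only [Finset.mem_Ico] at hm
    simp only [hU, Finset.mem_erase, Finset.mem_univ, and_true]
    constructor <;> rw [← Fin.val_ne_iff] <;> simp <;> omega
  · intro b hb
    have h := mem_U b hb
    have := b.isLt
    ext
    simp only
    omega
  · intro m hm
    simp only [Finset.mem_Ico] at hm
    simp only
    omega
  · intro b hb
    have h := mem_U b hb
    have hble : (b : ℕ) ≤ n := by have := b.isLt; omega
    rw [hg]
    simp only
    rw [Nat.cast_sub hble]
    ring

theorem orderedESF_sums_to_one (θ : ℝ) (hθ : 0 < θ) (n : ℕ) (hn : 1 ≤ n) :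
    ∑ c : Composition n,
      (θ ^ c.length * (n.factorial : ℝ) / risingFact θ n) *
        ∏ j ∈ Finset.range c.length, (((c.blocks.drop j).sum : ℝ))⁻¹ = 1 := by
  have hsummand : ∀ c : Composition n,
      (θ ^ c.length * (n.factorial : ℝ) / risingFact θ n) *
        ∏ j ∈ Finset.range c.length, (((c.blocks.drop j).sum : ℝ))⁻¹
      = ((n.factorial : ℝ) / risingFact θ n) *
        (fun B : Finset (Fin (n+1)) =>
          ∏ b ∈ B.erase (Fin.last n), (θ * ((n : ℝ) - (b : ℕ))⁻¹)) c.boundaries := by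
    intro c
    simp only
    rw [← weight_eq]
    ring
  rw [Finset.sum_congr rfl (fun c _ => hsummand c), ← Finset.mul_sum,
    sum_boundaries hn (fun B => ∏ b ∈ B.erase (Fin.last n), (θ * ((n : ℝ) - (b : ℕ))⁻¹)),
    sum_eval hn θ]
  -- now pure computation
  have hQpos : (0:ℝ) < ∏ m ∈ Finset.Ico 1 n, (θ + m) :=
    Finset.prod_pos fun m _ => by positivity
  have hR : risingFact θ n = θ * ∏ m ∈ Finset.Ico 1 n, (θ + m) := by
    obtain ⟨k, rfl⟩ : ∃ k, n = k + 1 := ⟨n - 1, by omega⟩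
    rw [risingFact, Finset.prod_range_succ' (fun i => θ + i) k,
      Finset.prod_Ico_eq_prod_range]
    simp only [Nat.add_sub_cancel, Nat.cast_zero, add_zero]
    rw [mul_comm]
    congr 1
    exact Finset.prod_congr rfl fun i _ => by push_cast; ring
  have hprod : ∏ m ∈ Finset.Ico 1 n, (1 + θ * (m:ℝ)⁻¹)
      = (∏ m ∈ Finset.Ico 1 n, (θ + m)) * (((n-1).factorial : ℝ))⁻¹ := by
    have hfact : ∏ m ∈ Finset.Ico 1 n, (m:ℝ) = ((n-1).factorial : ℝ) := by
      rw [← Nat.cast_prod]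
      congr 1
      have h : Finset.Ico 1 n = Finset.Ico 1 ((n-1)+1) := by congr 1; omega
      rw [h, Finset.prod_Ico_id_eq_factorial]
    rw [show ∀ s : Finset ℕ, (∀ m ∈ s, (1:ℝ) ≤ m) →
        ∏ m ∈ s, (1 + θ * (m:ℝ)⁻¹) = ∏ m ∈ s, ((θ + m) * (m:ℝ)⁻¹) from
      fun s hs => Finset.prod_congr rfl fun m hm => by
        have h1 : (1:ℝ) ≤ m := hs m hm
        have h0 : (m:ℝ) ≠ 0 := by linarith
        field_simp
        ring]
    · rw [Finset.prod_mul_distrib]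
      congr 1
      rw [← hfact, ← Finset.prod_inv_distrib]
    · intro m hm
      simp only [Finset.mem_Ico] at hm
      exact_mod_cast hm.1
  rw [hR, hprod]
  have hfac : ((n.factorial : ℕ) : ℝ) = (n:ℝ) * ((n-1).factorial : ℝ) := by
    rw [← Nat.cast_mul]
    congr 1
    rw [← Nat.mul_factorial_pred (by omega)]
  have hn0 : (n:ℝ) ≠ 0 := by positivity
  have hf0 : (((n-1).factorial : ℕ) : ℝ) ≠ 0 := by positivity
  rw [hfac]
  field_simp
end

section
/- For θ > 0 and integers 1 ≤ m ≤ n, the normalized binomial moment q(n:m) = w(n:m)/(1 - w(n:0)), where w(n:m) = θ · C(n,m) · B(m+1, n-m+θ), equals (θ/n) · (n!/(n-m)!) · [θ]_{n-m}/[θ]_n. -/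
noncomputable def betaFn (a b : ℝ) : ℝ := ∫ t in (0:ℝ)..1, t ^ (a - 1) * (1 - t) ^ (b - 1)

noncomputable def w (θ : ℝ) (n m : ℕ) : ℝ :=
  θ * (n.choose m : ℝ) * betaFn ((m : ℝ) + 1) ((n : ℝ) - (m : ℝ) + θ)

lemma betaFn_ofReal (a b : ℝ) : ((betaFn a b : ℝ) : ℂ) = Complex.betaIntegral a b := by
  rw [betaFn, Complex.betaIntegral, ← intervalIntegral.integral_ofReal]
  refine intervalIntegral.integral_congr fun x hx => ?_
  rw [Set.uIcc_of_le (by norm_num)] at hx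
  have h2 : (0:ℝ) ≤ 1 - x := by linarith [hx.2]
  rw [show ((a:ℂ) - 1 : ℂ) = ((a - 1 : ℝ) : ℂ) by push_cast; ring,
    show ((b:ℂ) - 1 : ℂ) = ((b - 1 : ℝ) : ℂ) by push_cast; ring,
    show (1 - (x:ℂ) : ℂ) = ((1 - x : ℝ) : ℂ) by push_cast; ring,
    ← Complex.ofReal_cpow hx.1, ← Complex.ofReal_cpow h2]
  push_cast
  ring

lemma betaFn_nat_left {b : ℝ} (hb : 0 < b) (m : ℕ) :
    betaFn ((m : ℝ) + 1) b = m.factorial / ∏ j ∈ Finset.range (m + 1), (b + j) := by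
  have h := Complex.betaIntegral_eval_nat_add_one_right (u := (b : ℂ)) (by simpa using hb) m
  rw [← Complex.betaIntegral_symm] at h
  have h2 := betaFn_ofReal ((m : ℝ) + 1) b
  rw [Complex.ofReal_add, Complex.ofReal_natCast, Complex.ofReal_one, h] at h2
  have h4 : ((m.factorial / ∏ j ∈ Finset.range (m + 1), (b + j) : ℝ) : ℂ)
      = (m.factorial : ℂ) / ∏ j ∈ Finset.range (m + 1), ((b : ℂ) + j) := by
    push_cast; ring
  exact Complex.ofReal_injective (h2.trans h4.symm)

lemma risingFact_pos {θ : ℝ} (hθ : 0 < θ) (k : ℕ) : 0 < risingFact θ k :=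
  Finset.prod_pos fun i _ => by positivity

theorem normalized_binomial_moment (θ : ℝ) (hθ : 0 < θ) (n m : ℕ) (hm : 1 ≤ m) (hmn : m ≤ n) :
    w θ n 0 < 1 ∧
    w θ n m / (1 - w θ n 0)
      = (θ / n) * ((n.factorial : ℝ) / ((n - m).factorial : ℝ)) *
          (risingFact θ (n - m) / risingFact θ n) := by
  have hn : 1 ≤ n := le_trans hm hmn
  have hn0 : (0:ℝ) < n := by exact_mod_cast hn
  have hθn : (0:ℝ) < θ + n := by linarith
  have hmr : (m:ℝ) ≤ n := by exact_mod_cast hmn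
  have hw0 : w θ n 0 = θ / (θ + n) := by
    rw [w, betaFn_nat_left (by push_cast; linarith) 0]
    push_cast
    rw [Finset.prod_range_one]
    field_simp
    simp only [Nat.choose_zero_right, Nat.factorial_zero, Nat.cast_one, Nat.cast_zero, sub_zero, add_zero, one_mul]
    rw [add_comm]; exact div_self (by linarith)
  have hw0lt : w θ n 0 < 1 := by
    rw [hw0, div_lt_one hθn]; linarith
  refine ⟨hw0lt, ?_⟩
  have hb : (0:ℝ) < (n:ℝ) - m + θ := by linarith
  have hA := risingFact_pos hθ (n - m)
  have hB := risingFact_pos hθ n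
  have hsplit : risingFact θ n * (θ + n)
      = risingFact θ (n - m) * ∏ j ∈ Finset.range (m + 1), ((n:ℝ) - m + θ + j) := by
    have h1 : risingFact θ (n + 1) = risingFact θ n * (θ + n) := by
      rw [risingFact, risingFact, Finset.prod_range_succ]
    rw [← h1, risingFact, risingFact, show n + 1 = (n - m) + (m + 1) by omega,
      Finset.prod_range_add]
    congr 1
    refine Finset.prod_congr rfl fun j _ => ?_
    push_cast [Nat.cast_sub hmn]
    ring
  have hchoose : (n.choose m : ℝ) * m.factorial * (n - m).factorial = n.factorial := by
    exact_mod_cast Nat.choose_mul_factorial_mul_factorial hmn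
  have hP : (0:ℝ) < ∏ j ∈ Finset.range (m + 1), ((n:ℝ) - m + θ + j) :=
    Finset.prod_pos fun j _ => by positivity
  have hf : (0:ℝ) < ((n - m).factorial : ℝ) := by exact_mod_cast (n - m).factorial_pos
  rw [w, betaFn_nat_left hb m, hw0]
  rw [show (1 : ℝ) - θ / (θ + n) = n / (θ + n) by field_simp; ring]
  have hPval : (∏ j ∈ Finset.range (m + 1), ((n:ℝ) - m + θ + j))
      = risingFact θ n * (θ + n) / risingFact θ (n - m) := by
    rw [eq_div_iff hA.ne']
    linear_combination -hsplit
  have hC : (n.choose m : ℝ) = n.factorial / (m.factorial * (n - m).factorial) := by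
    rw [eq_div_iff (by positivity)]
    linear_combination hchoose
  rw [hPval, hC]
  have hmf : (0:ℝ) < (m.factorial : ℝ) := by exact_mod_cast m.factorial_pos
  field_simp
end

section
/- For 0 < α < 1 and 1 ≤ m ≤ n, the quantity q(n:m) = -C(α,m)·C(-α,n-m)/C(-α,n) is nonnegative and ∑_{m=1}^n q(n:m) = 1, i.e. q(n:·) is a probability distribution on {1,...,n}. -/
/-- generalized binomial coefficient C(x,k) = x(x-1)⋯(x-k+1)/k! -/
noncomputable def genChoose (x : ℝ) (k : ℕ) : ℝ :=
  (∏ i ∈ Finset.range k, (x - i)) / (k.factorial : ℝ)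

noncomputable def qPSF (α : ℝ) (n m : ℕ) : ℝ :=
  -(genChoose α m * genChoose (-α) (n - m) / genChoose (-α) n)

lemma descSmeval (x : ℝ) (k : ℕ) :
    (descPochhammer ℤ k).smeval x = ∏ i ∈ Finset.range k, (x - i) := by
  induction k with
  | zero => simp [descPochhammer_zero, Polynomial.smeval_one]
  | succ n ih =>
    rw [descPochhammer_succ_right, Polynomial.smeval_mul, ih, Finset.prod_range_succ]
    congr 1
    simp [Polynomial.smeval_sub, Polynomial.smeval_X, Polynomial.smeval_natCast]

lemma genChoose_eq (x : ℝ) (k : ℕ) : genChoose x k = Ring.choose x k := by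
  have h := Ring.descPochhammer_eq_factorial_smul_choose x k
  rw [descSmeval] at h
  unfold genChoose
  rw [h, nsmul_eq_mul]
  field_simp

lemma sign_neg_alpha {α : ℝ} (hα : 0 < α) (k : ℕ) :
    0 < (-1 : ℝ) ^ k * genChoose (-α) k := by
  unfold genChoose
  rw [mul_div_assoc']
  apply div_pos
  · have h1 : (-1 : ℝ) ^ k = ∏ _i ∈ Finset.range k, (-1 : ℝ) := by simp
    rw [h1, ← Finset.prod_mul_distrib]
    have : ∀ i ∈ Finset.range k, (-1 : ℝ) * (-α - i) = α + i := fun i _ => by ring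
    rw [Finset.prod_congr rfl this]
    exact Finset.prod_pos fun i _ => by positivity
  · exact_mod_cast Nat.factorial_pos k

lemma sign_alpha {α : ℝ} (hα : 0 < α) (hα1 : α < 1) {m : ℕ} (hm : 1 ≤ m) :
    0 < (-1 : ℝ) ^ (m - 1) * genChoose α m := by
  obtain ⟨j, rfl⟩ := Nat.exists_eq_add_of_le hm
  rw [Nat.add_comm 1 j]
  simp only [Nat.add_sub_cancel]
  unfold genChoose
  rw [mul_div_assoc']
  apply div_pos
  · rw [Finset.prod_range_succ', Nat.cast_zero, sub_zero, ← mul_assoc]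
    have h1 : (-1 : ℝ) ^ j * ∏ i ∈ Finset.range j, (α - (i + 1 : ℕ))
        = ∏ i ∈ Finset.range j, ((i : ℝ) + 1 - α) := by
      have h2 : (-1 : ℝ) ^ j = ∏ _i ∈ Finset.range j, (-1 : ℝ) := by simp
      rw [h2, ← Finset.prod_mul_distrib]
      refine Finset.prod_congr rfl fun i _ => ?_
      push_cast; ring
    rw [h1]
    refine mul_pos (Finset.prod_pos fun i _ => by
      have : (0:ℝ) ≤ i := Nat.cast_nonneg i; linarith) hα
  · exact_mod_cast Nat.factorial_pos (j + 1)

theorem qPSF_prob_dist (α : ℝ) (hα : 0 < α) (hα1 : α < 1) (n : ℕ) (hn : 1 ≤ n) :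
    (∀ m ∈ Finset.Icc 1 n, 0 ≤ qPSF α n m) ∧
    ∑ m ∈ Finset.Icc 1 n, qPSF α n m = 1 := by
  have hc : 0 < (-1 : ℝ) ^ n * genChoose (-α) n := sign_neg_alpha hα n
  have hD : genChoose (-α) n ≠ 0 := by
    intro h; rw [h, mul_zero] at hc; exact lt_irrefl 0 hc
  constructor
  · intro m hm
    obtain ⟨hm1, hm2⟩ := Finset.mem_Icc.mp hm
    have ha : 0 < (-1 : ℝ) ^ (m - 1) * genChoose α m := sign_alpha hα hα1 hm1
    have hb : 0 < (-1 : ℝ) ^ (n - m) * genChoose (-α) (n - m) := sign_neg_alpha hα (n - m)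
    set a := (-1 : ℝ) ^ (m - 1) * genChoose α m with ha'
    set b := (-1 : ℝ) ^ (n - m) * genChoose (-α) (n - m) with hb'
    set c := (-1 : ℝ) ^ n * genChoose (-α) n with hc'
    have even_pow : ∀ k : ℕ, (-1 : ℝ) ^ k * (-1 : ℝ) ^ k = 1 := fun k => by
      rw [← pow_add]; exact Even.neg_one_pow ⟨k, rfl⟩
    have e1 : genChoose α m = (-1 : ℝ) ^ (m - 1) * a := by
      rw [ha', ← mul_assoc, even_pow, one_mul]
    have e2 : genChoose (-α) (n - m) = (-1 : ℝ) ^ (n - m) * b := by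
      rw [hb', ← mul_assoc, even_pow, one_mul]
    have e3 : genChoose (-α) n = (-1 : ℝ) ^ n * c := by
      rw [hc', ← mul_assoc, even_pow, one_mul]
    have hnum : ((-1 : ℝ) ^ (m - 1) * a) * ((-1 : ℝ) ^ (n - m) * b)
        = -((-1 : ℝ) ^ n * (a * b)) := by
      have : (-1 : ℝ) ^ (m - 1) * (-1 : ℝ) ^ (n - m) = -(-1 : ℝ) ^ n := by
        rw [← pow_add, show m - 1 + (n - m) = n - 1 by omega,
          show n = (n - 1) + 1 by omega, pow_succ]
        ring_nf
        congr 1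
        omega
      calc ((-1 : ℝ) ^ (m - 1) * a) * ((-1 : ℝ) ^ (n - m) * b)
          = ((-1 : ℝ) ^ (m - 1) * (-1 : ℝ) ^ (n - m)) * (a * b) := by ring
        _ = -((-1 : ℝ) ^ n * (a * b)) := by rw [this]; ring
    have key : qPSF α n m = a * b / c := by
      rw [qPSF, e1, e2, e3, hnum]
      rw [neg_div, neg_neg, mul_div_mul_left _ _ (by positivity : ((-1:ℝ)^n) ≠ 0)]
    rw [key]
    positivity
  · have hvdm := Ring.add_choose_eq (R := ℝ) (r := α) (s := -α) n (Commute.all _ _)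
    rw [add_neg_cancel, show n = (n - 1) + 1 by omega, Ring.choose_zero_succ,
      Finset.Nat.sum_antidiagonal_eq_sum_range_succ_mk] at hvdm
    rw [show n - 1 + 1 = n by omega] at hvdm
    simp only [← genChoose_eq] at hvdm
    have hsplit : ∑ k ∈ Finset.range (n + 1), genChoose α k * genChoose (-α) (n - k)
        = (∑ k ∈ Finset.range n, genChoose α (k + 1) * genChoose (-α) (n - (k + 1)))
          + genChoose α 0 * genChoose (-α) (n - 0) := Finset.sum_range_succ' _ n
    have h0 : genChoose α 0 = 1 := by simp [genChoose]
    have hIcc : ∑ m ∈ Finset.Icc 1 n, qPSF α n m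
        = -((∑ k ∈ Finset.range n, genChoose α (k + 1) * genChoose (-α) (n - (k + 1)))
            / genChoose (-α) n) := by
      rw [← Finset.Ico_add_one_right_eq_Icc, Finset.sum_Ico_eq_sum_range]
      rw [show n + 1 - 1 = n by omega]
      simp only [qPSF, Nat.add_sub_cancel]
      rw [Finset.sum_div, ← Finset.sum_neg_distrib]
      exact Finset.sum_congr rfl fun k _ => by rw [Nat.add_comm 1 k]
    have hS : ∑ k ∈ Finset.range n, genChoose α (k + 1) * genChoose (-α) (n - (k + 1))
        = -genChoose (-α) n := by
      have := hvdm.symm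
      rw [hsplit, h0, one_mul, Nat.sub_zero] at this
      linarith
    rw [hIcc, hS, neg_div, neg_neg, div_self hD]
end

section
/- For θ > 0 and 1 ≤ m ≤ n fixed, as α → 0+ the quantity q_α(n:m) = C(n,m)·[α]_m·[θ]_{n-m}/([α+θ]_n - [θ]_n) converges to (n!/(n-m)!)·([θ]_{n-m}/[θ]_n)·1/(m·h_θ(n)), where h_θ(n) = ∑_{k=1}^n 1/(θ+k-1). -/
noncomputable def genHarmonic (θ : ℝ) (k : ℕ) : ℝ := ∑ i ∈ Finset.range k, 1 / (θ + i)

lemma risingFact_pos_s11 {x : ℝ} (hx : 0 < x) (k : ℕ) : 0 < risingFact x k := by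
  apply Finset.prod_pos
  intro i _
  positivity

lemma genHarmonic_pos {θ : ℝ} (hθ : 0 < θ) {k : ℕ} (hk : 1 ≤ k) : 0 < genHarmonic θ k := by
  apply Finset.sum_pos
  · intro i _
    positivity
  · exact Finset.nonempty_range_iff.mpr (by omega)

-- derivative of α ↦ risingFact α m at 0 is (m-1)!
lemma hasDerivAt_risingFact_zero (m : ℕ) (hm : 1 ≤ m) :
    HasDerivAt (fun α : ℝ => risingFact α m) ((m - 1).factorial : ℝ) 0 := by
  have h : HasDerivAt (fun α : ℝ => ∏ i ∈ Finset.range m, (α + (i : ℝ)))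
      (∑ i ∈ Finset.range m, (∏ j ∈ (Finset.range m).erase i, ((0 : ℝ) + (j : ℝ))) • (1 : ℝ)) 0 := by
    apply HasDerivAt.fun_finsetProd
    intro i _
    simpa using (hasDerivAt_id (0 : ℝ)).add_const (i : ℝ)
  convert h using 1
  · rfl
  rw [Finset.sum_eq_single 0]
  · rw [smul_eq_mul, mul_one]
    have : (Finset.range m).erase 0 = Finset.Ico 1 m := by
      ext j; simp [Finset.mem_erase, Nat.pos_iff_ne_zero]; omega
    rw [this]
    have hprod : ∏ j ∈ Finset.Ico 1 m, (j : ℕ) = (m - 1).factorial := by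
      have h2 := Finset.prod_Ico_id_eq_factorial (m - 1)
      rwa [Nat.sub_add_cancel hm] at h2
    calc ((m-1).factorial : ℝ) = ((∏ j ∈ Finset.Ico 1 m, (j : ℕ) : ℕ) : ℝ) := by rw [hprod]
      _ = ∏ j ∈ Finset.Ico 1 m, ((0:ℝ) + (j:ℝ)) := by push_cast; simp
  · intro i hi hi0
    have : (0 : ℕ) ∈ (Finset.range m).erase i := by
      simp [Finset.mem_erase, Ne.symm hi0]; omega
    rw [smul_eq_mul, mul_one, Finset.prod_eq_zero this]
    norm_num
  · intro h
    simp at h; omega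

-- derivative of α ↦ risingFact (α+θ) n at 0 is risingFact θ n * genHarmonic θ n
lemma hasDerivAt_risingFact_shift (θ : ℝ) (hθ : 0 < θ) (n : ℕ) :
    HasDerivAt (fun α : ℝ => risingFact (α + θ) n)
      (risingFact θ n * genHarmonic θ n) 0 := by
  have h : HasDerivAt (fun α : ℝ => ∏ i ∈ Finset.range n, (α + θ + (i : ℝ)))
      (∑ i ∈ Finset.range n, (∏ j ∈ (Finset.range n).erase i, ((0 : ℝ) + θ + (j : ℝ))) • (1 : ℝ)) 0 := by
    apply HasDerivAt.fun_finsetProd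
    intro i _
    simpa [add_assoc] using (hasDerivAt_id (0 : ℝ)).add_const (θ + (i : ℝ))
  convert h using 1
  · rfl
  rw [risingFact, genHarmonic, Finset.mul_sum, Finset.sum_congr rfl]
  intro i hi
  have hpos : (0:ℝ) < θ + i := by positivity
  rw [smul_eq_mul, mul_one, ← Finset.mul_prod_erase _ _ hi]
  have : ∀ j ∈ (Finset.range n).erase i, ((0:ℝ) + θ + (j:ℝ)) = θ + j := by
    intro j _; ring
  rw [Finset.prod_congr rfl this]
  field_simp

theorem q_alpha_limit (θ : ℝ) (hθ : 0 < θ) (n m : ℕ) (hm : 1 ≤ m) (hmn : m ≤ n) :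
    Filter.Tendsto
      (fun α : ℝ =>
        (n.choose m : ℝ) * risingFact α m * risingFact θ (n - m) /
          (risingFact (α + θ) n - risingFact θ n))
      (nhdsWithin 0 (Set.Ioi 0))
      (nhds (((n.factorial : ℝ) / ((n - m).factorial : ℝ)) *
        (risingFact θ (n - m) / risingFact θ n) * (1 / ((m : ℝ) * genHarmonic θ n)))) := by
  have hle : nhdsWithin (0:ℝ) (Set.Ioi 0) ≤ nhdsWithin 0 {(0:ℝ)}ᶜ :=
    nhdsWithin_mono 0 (fun x hx => ne_of_gt hx)
  -- numerator slope
  have hN0 : risingFact (0:ℝ) m = 0 := by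
    apply Finset.prod_eq_zero (Finset.mem_range.mpr (by omega : 0 < m))
    norm_num
  have hNslope : Filter.Tendsto (fun α : ℝ => risingFact α m / α)
      (nhdsWithin 0 (Set.Ioi 0)) (nhds ((m - 1).factorial : ℝ)) := by
    have := (hasDerivAt_iff_tendsto_slope.mp (hasDerivAt_risingFact_zero m hm)).mono_left hle
    refine this.congr' ?_
    filter_upwards [self_mem_nhdsWithin] with α hα
    simp [slope_def_field, hN0, div_eq_inv_mul]
  have hDslope : Filter.Tendsto
      (fun α : ℝ => (risingFact (α + θ) n - risingFact θ n) / α)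
      (nhdsWithin 0 (Set.Ioi 0)) (nhds (risingFact θ n * genHarmonic θ n)) := by
    have := (hasDerivAt_iff_tendsto_slope.mp (hasDerivAt_risingFact_shift θ hθ n)).mono_left hle
    refine this.congr' ?_
    filter_upwards [self_mem_nhdsWithin] with α hα
    simp [slope_def_field, div_eq_inv_mul]
  have hRn : 0 < risingFact θ n := risingFact_pos_s11 hθ n
  have hH : 0 < genHarmonic θ n := genHarmonic_pos hθ (le_trans hm hmn)
  have hD0 : risingFact θ n * genHarmonic θ n ≠ 0 := by positivity
  have key : Filter.Tendsto
      (fun α : ℝ =>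
        ((n.choose m : ℝ) * (risingFact α m / α) * risingFact θ (n - m)) /
          ((risingFact (α + θ) n - risingFact θ n) / α))
      (nhdsWithin 0 (Set.Ioi 0))
      (nhds (((n.choose m : ℝ) * ((m - 1).factorial : ℝ) * risingFact θ (n - m)) /
        (risingFact θ n * genHarmonic θ n))) :=
    (((tendsto_const_nhds.mul hNslope).mul tendsto_const_nhds).div hDslope hD0)
  have heq : ((n.choose m : ℝ) * ((m - 1).factorial : ℝ) * risingFact θ (n - m)) /
        (risingFact θ n * genHarmonic θ n)
      = ((n.factorial : ℝ) / ((n - m).factorial : ℝ)) *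
        (risingFact θ (n - m) / risingFact θ n) * (1 / ((m : ℝ) * genHarmonic θ n)) := by
    have hchoose : (n.choose m : ℝ) * (m.factorial : ℝ) * ((n-m).factorial : ℝ)
        = (n.factorial : ℝ) := by
      exact_mod_cast congrArg (Nat.cast : ℕ → ℝ) (Nat.choose_mul_factorial_mul_factorial hmn)
    have hmfact : (m.factorial : ℝ) = m * ((m - 1).factorial : ℝ) := by
      have := Nat.succ_pred_eq_of_pos (by omega : 0 < m)
      calc (m.factorial : ℝ) = (((m-1)+1).factorial : ℝ) := by rw [Nat.sub_add_cancel hm]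
        _ = ((m-1)+1 : ℕ) * ((m-1).factorial : ℝ) := by rw [Nat.factorial_succ]; push_cast; ring
        _ = m * ((m - 1).factorial : ℝ) := by rw [Nat.sub_add_cancel hm]
    have hm0 : (m:ℝ) ≠ 0 := by positivity
    have hf1 : ((n-m).factorial : ℝ) ≠ 0 := by positivity
    rw [← hchoose, hmfact]
    field_simp
  rw [← heq]
  refine key.congr' ?_
  filter_upwards [self_mem_nhdsWithin] with α hα
  have hαne : α ≠ 0 := ne_of_gt hα
  field_simp
end

section
/- The partition structure obtained from g(λ) = n!/[θ]_n ∏_{j=1}^ℓ 1/(λ_j h_θ(Λ_j)) does not belong to the Ewens–Pitman two-parameter family: for n = 5, the probability g(5) = 5!/([θ]_5 · 5 · h_θ(5)) of the one-part composition cannot, for any θ > 0, be matched simultaneously with g(n) for n = 1,...,5 by an Ewens–Pitman (α',θ') partition structure's probability of a single block, which equals [1-α']_{n-1}/[1+θ']_{n-1}. -/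
theorem not_Ewens_Pitman (θ : ℝ) (hθ : 0 < θ) :
    ¬ ∃ α' θ' : ℝ, 0 ≤ α' ∧ α' < 1 ∧ -α' < θ' ∧
      ∀ n : ℕ, 1 ≤ n → n ≤ 5 →
        risingFact (1 - α') (n - 1) / risingFact (1 + θ') (n - 1)
          = (n.factorial : ℝ) / (risingFact θ n * n * genHarmonic θ n) := by
  rintro ⟨a, t, ha0, ha1, hat, H⟩
  have h2 := H 2 (by norm_num) (by norm_num)
  have h3 := H 3 (by norm_num) (by norm_num)
  have h4 := H 4 (by norm_num) (by norm_num)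
  simp only [risingFact, genHarmonic, Nat.factorial] at h2 h3 h4
  norm_num [Finset.prod_range_succ, Finset.sum_range_succ] at h2 h3 h4
  have ht0 : θ ≠ 0 := hθ.ne'
  have ht1 : (θ+1) ≠ 0 := by positivity
  have ht2 : (θ+2) ≠ 0 := by positivity
  have ht3 : (θ+3) ≠ 0 := by positivity
  have hta : (0:ℝ) < 1 + t := by linarith
  have htb : (0:ℝ) < 2 + t := by linarith
  have htc : (0:ℝ) < 3 + t := by linarith
  have ha : (0:ℝ) < 1 - a := by linarith
  have h2a : (0:ℝ) < 2 - a := by linarith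
  field_simp at h2 h3 h4
  have E1 : (1-a)*(2*θ+1) = 1+t := by
    have hc : ((2*(θ*(θ+1))):ℝ) ≠ 0 := by positivity
    apply mul_left_cancel₀ hc
    linear_combination (2*(θ*(θ+1))) * h2
  have E2 : (2-a)*(3*θ^2+6*θ+2) = 2*(2*θ+1)*(2+t) := by
    have hc : ((1-a) * (3*(θ*(θ+1)*(θ+2))) : ℝ) ≠ 0 :=
      ne_of_gt (mul_pos ha (by positivity))
    apply mul_left_cancel₀ hc
    linear_combination (θ*(θ+1)*(θ+2)) * h3 - (6*(θ*(θ+1)*(θ+2))*(2+t)) * E1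
  have E3 : (3-a)*(4*θ^3+18*θ^2+22*θ+6) = 3*(3*θ^2+6*θ+2)*(3+t) := by
    have hc : ((1-a)*(2-a) * (4*(θ*(θ+1)*(θ+2)*(θ+3))) : ℝ) ≠ 0 :=
      ne_of_gt (mul_pos (mul_pos ha h2a) (by positivity))
    apply mul_left_cancel₀ hc
    linear_combination (θ*(θ+1)*(θ+2)*(θ+3)) * h4 - (12*(θ*(θ+1)*(θ+2)*(θ+3))*(3+t)*(1-a)) * E2
      - (24*(θ*(θ+1)*(θ+2)*(θ+3))*(3+t)*(2+t)) * E1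
  have key : 2*θ^3 + 3*θ^4 + 2*θ^5 = 0 := by
    linear_combination (-(11*θ^4+28*θ^3+20*θ^2+4*θ)) * E1
      + (14*θ^3+27*θ^2+8*θ) * E2 + (-(5*θ^2+2*θ)) * E3
  nlinarith [pow_pos hθ 3, pow_pos hθ 4, pow_pos hθ 5]
end
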